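/- Let p ≥ 2 be an integer and P = p + 1/2. Define s₂ = Σ_{j=p}^∞ (1/j)(p+j)^{−1/2} and S₂ = Σ_{j=p}^∞ (1/(j+1/2))(p+j+1)^{−1/2}. Then |S₂ − s₂| ≤ 2 p^{−3/2}. -/

import Mathlib

open Real Finset

set_option maxHeartbeats 1000000 in
lemma keyA (q x : ℝ) (hq : 2 ≤ q) (hqx : q ≤ x) :
    1/(x * Real.sqrt (q + x)) - 1/((x + 1/2) * Real.sqrt (q + x + 1)) ≤
      2 * (1/(x * Real.sqrt x) - 1/((x + 1) * Real.sqrt (x + 1))) := by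
  have hx2 : (2:ℝ) ≤ x := le_trans hq hqx
  have hx0 : 0 < x := by linarith
  set u := Real.sqrt x with hu
  set v := Real.sqrt (x+1) with hv
  set s := Real.sqrt (q+x) with hs
  set t := Real.sqrt (q+x+1) with ht
  have hu2 : u^2 = x := Real.sq_sqrt hx0.le
  have hv2 : v^2 = x+1 := Real.sq_sqrt (by linarith)
  have hs2 : s^2 = q+x := Real.sq_sqrt (by linarith)
  have ht2 : t^2 = q+x+1 := Real.sq_sqrt (by linarith)
  have hu0 : 0 < u := Real.sqrt_pos.2 hx0
  have hv0 : 0 < v := Real.sqrt_pos.2 (by linarith)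
  have hs0 : 0 < s := Real.sqrt_pos.2 (by linarith)
  have ht0 : 0 < t := Real.sqrt_pos.2 (by linarith)
  have huv : u ≤ v := Real.sqrt_le_sqrt (by linarith)
  have hus : u ≤ s := Real.sqrt_le_sqrt (by linarith)
  have hst : s ≤ t := Real.sqrt_le_sqrt (by linarith)
  have hvt : v ≤ t := Real.sqrt_le_sqrt (by linarith)
  have hu1 : 1 ≤ u := by nlinarith [hu2, hu0]
  have hxu : x * u = u^3 := by rw [← hu2]; ring
  have hxv : (x+1) * v = v^3 := by rw [← hv2]; ring
  have hA : 2*u*(t-s) ≤ 1 := by nlinarith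
  have hB : x ≤ s*t := by nlinarith
  have h1 : 1/(x*s) - 1/(x*t) ≤ 1/(2*x^2*u) := by
    rw [div_sub_div _ _ (by positivity) (by positivity),
      div_le_div_iff₀ (by positivity) (by positivity)]
    nlinarith [mul_le_mul_of_nonneg_left hA (le_of_lt (pow_pos hx0 3)),
      mul_le_mul_of_nonneg_left hB (le_of_lt (mul_pos (pow_pos hx0 2) hx0))]
  have h2 : 1/(x*t) - 1/((x+1/2)*t) ≤ 1/(2*x^2*u) := by
    rw [div_sub_div _ _ (by positivity) (by positivity),
      div_le_div_iff₀ (by positivity) (by positivity)]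
    have hut : u ≤ t := le_trans hus hst
    nlinarith [mul_le_mul_of_nonneg_left hut (by positivity : (0:ℝ) ≤ x^2*t),
      mul_pos ht0 ht0, mul_le_mul_of_nonneg_left (le_of_lt hx0) (by positivity : (0:ℝ) ≤ t^2*x)]
  have hv3 : v^3 = (u^2+1)*v := by rw [hu2, ← hv2]; ring
  have hu21 : 1 ≤ u^2 := by rw [hu2]; linarith
  have hfac : (0:ℝ) ≤ (2*u^2-1)*(u^2+1) := mul_nonneg (by linarith) (by positivity)
  have hN : 0 ≤ 2*u^2*v^3 - 2*u^5 - v^3 := by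
    nlinarith [mul_le_mul_of_nonneg_left huv hfac, hv3, hu1, hu0]
  have h3 : 1/(x^2*u) ≤ 2 * (1/(x*u) - 1/((x+1)*v)) := by
    have e : 2*(1/(x*u) - 1/((x+1)*v)) - 1/(x^2*u)
        = (2*u^2*v^3 - 2*u^5 - v^3)/(u^5*v^3) := by
      rw [hxu, hxv, show x^2*u = u^5 from by rw [← hu2]; ring]
      field_simp
    have hdn : 0 ≤ (2*u^2*v^3 - 2*u^5 - v^3)/(u^5*v^3) :=
      div_nonneg hN (by positivity)
    linarith [e, hdn]
  have hhalf : 1/(2*x^2*u) + 1/(2*x^2*u) = 1/(x^2*u) := by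
    field_simp
    ring
  linarith [h1, h2, h3]

lemma hsum_aux : Summable (fun j : ℕ => 1/((j:ℝ) * Real.sqrt j)) := by
  have h : Summable (fun j : ℕ => ((j:ℝ))^(-(3/2) : ℝ)) :=
    Real.summable_nat_rpow.2 (by norm_num)
  refine h.congr fun j => ?_
  rcases Nat.eq_zero_or_pos j with rfl | hj
  · simp [Real.zero_rpow]
  · have hj0 : (0:ℝ) < j := by exact_mod_cast hj
    rw [Real.rpow_neg hj0.le, show (3/2 : ℝ) = 1 + 1/2 by norm_num,
      Real.rpow_add hj0, Real.rpow_one, ← Real.sqrt_eq_rpow, one_div]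

lemma tele_sum (p : ℕ) (T : ℕ → ℝ) (n : ℕ) :
    ∑ j ∈ Finset.range n, (if p ≤ j then T j - T (j+1) else 0) = T p - T (max p n) := by
  induction n with
  | zero => simp
  | succ n ih =>
    rw [Finset.sum_range_succ, ih]
    by_cases h : p ≤ n
    · rw [if_pos h, max_eq_right h, max_eq_right (le_trans h (Nat.le_succ n))]; ring
    · rw [if_neg h, max_eq_left (le_of_not_ge h), max_eq_left (by omega)]; ring

theorem stmt18 (p : ℕ) (hp : 2 ≤ p) :
    |(∑' j : ℕ, (if p ≤ j then 1 / (((j:ℝ) + 1/2) * Real.sqrt ((p:ℝ) + j + 1)) else 0)) -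
     (∑' j : ℕ, (if p ≤ j then 1 / ((j:ℝ) * Real.sqrt ((p:ℝ) + j)) else 0))| ≤
      2 * (p:ℝ) ^ (-(3:ℝ)/2) := by
  have hpR : (2:ℝ) ≤ (p:ℝ) := by exact_mod_cast hp
  have hp0 : (0:ℝ) < p := by linarith
  set F := fun j : ℕ => if p ≤ j then 1 / (((j:ℝ) + 1/2) * Real.sqrt ((p:ℝ) + j + 1)) else 0 with hF
  set G := fun j : ℕ => if p ≤ j then 1 / ((j:ℝ) * Real.sqrt ((p:ℝ) + j)) else 0 with hG
  set T := fun j : ℕ => 2/((j:ℝ) * Real.sqrt j) with hT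
  set B := fun j : ℕ => if p ≤ j then T j - T (j+1) else 0 with hB
  have hjfact : ∀ j : ℕ, p ≤ j → (2:ℝ) ≤ (j:ℝ) ∧ (p:ℝ) ≤ (j:ℝ) := by
    intro j hj
    exact ⟨by exact_mod_cast le_trans hp hj, by exact_mod_cast hj⟩
  have hFnonneg : ∀ j, 0 ≤ F j := by
    intro j; rw [hF]; dsimp only; split
    · rename_i hj
      obtain ⟨h2, hpj⟩ := hjfact _ hj
      positivity
    · exact le_refl _
  have hGnonneg : ∀ j, 0 ≤ G j := by
    intro j; rw [hG]; dsimp only; split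
    · rename_i hj
      obtain ⟨h2, hpj⟩ := hjfact _ hj
      positivity
    · exact le_refl _
  have hFle : ∀ j, F j ≤ 1/((j:ℝ) * Real.sqrt j) := by
    intro j; rw [hF]; dsimp only; split
    · rename_i hj
      obtain ⟨h2, hpj⟩ := hjfact _ hj
      apply one_div_le_one_div_of_le (by positivity)
      have hs : Real.sqrt (j:ℝ) ≤ Real.sqrt ((p:ℝ) + j + 1) := Real.sqrt_le_sqrt (by linarith)
      have := Real.sqrt_nonneg (j:ℝ)
      nlinarith
    · positivity
  have hGle : ∀ j, G j ≤ 1/((j:ℝ) * Real.sqrt j) := by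
    intro j; rw [hG]; dsimp only; split
    · rename_i hj
      obtain ⟨h2, hpj⟩ := hjfact _ hj
      apply one_div_le_one_div_of_le (by positivity)
      have hs : Real.sqrt (j:ℝ) ≤ Real.sqrt ((p:ℝ) + j) := Real.sqrt_le_sqrt (by linarith)
      nlinarith
    · positivity
  have hFs : Summable F := Summable.of_nonneg_of_le hFnonneg hFle hsum_aux
  have hGs : Summable G := Summable.of_nonneg_of_le hGnonneg hGle hsum_aux
  have hkey : ∀ j, |F j - G j| ≤ B j := by
    intro j
    by_cases hj : p ≤ j
    · obtain ⟨h2, hpj⟩ := hjfact _ hj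
      have hk := keyA (p:ℝ) (j:ℝ) hpR hpj
      have hmono : F j ≤ G j := by
        rw [hF, hG]; dsimp only; rw [if_pos hj, if_pos hj]
        apply one_div_le_one_div_of_le
        · have hs0 : 0 < Real.sqrt ((p:ℝ) + j) := Real.sqrt_pos.2 (by linarith)
          positivity
        · have hs : Real.sqrt ((p:ℝ) + j) ≤ Real.sqrt ((p:ℝ) + j + 1) :=
            Real.sqrt_le_sqrt (by linarith)
          have hs0 : 0 ≤ Real.sqrt ((p:ℝ) + j) := Real.sqrt_nonneg _
          nlinarith
      rw [abs_sub_comm, abs_of_nonneg (by linarith)]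
      have hBj : B j = 2/((j:ℝ) * Real.sqrt j) - 2/(((j:ℝ)+1) * Real.sqrt ((j:ℝ)+1)) := by
        rw [hB, hT]; dsimp only; rw [if_pos hj]
        push_cast
        ring
      rw [hBj, hF, hG]; dsimp only; rw [if_pos hj, if_pos hj]
      have hr : 2 * (1/((j:ℝ) * Real.sqrt j) - 1/(((j:ℝ)+1) * Real.sqrt ((j:ℝ)+1)))
          = 2/((j:ℝ) * Real.sqrt j) - 2/(((j:ℝ)+1) * Real.sqrt ((j:ℝ)+1)) := by ring
      linarith
    · rw [hF, hG, hB]; dsimp only; rw [if_neg hj, if_neg hj, if_neg hj]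
      simp
  have hBnonneg : ∀ j, 0 ≤ B j := fun j => le_trans (abs_nonneg _) (hkey j)
  have hBpartial : ∀ n, ∑ j ∈ Finset.range n, B j ≤ T p := by
    intro n
    rw [hB]
    rw [tele_sum p T n]
    have : 0 ≤ T (max p n) := by rw [hT]; positivity
    linarith
  have hBs : Summable B := summable_of_sum_range_le hBnonneg hBpartial
  have habs : Summable (fun j => |F j - G j|) := (hFs.sub hGs).abs
  have hTp : T p ≤ 2 * (p:ℝ) ^ (-(3:ℝ)/2) := by
    have he : ((p:ℝ)) ^ (-(3:ℝ)/2) = 1/((p:ℝ) * Real.sqrt p) := by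
      rw [show (-(3:ℝ)/2) = -(1 + 1/2) by norm_num, Real.rpow_neg hp0.le,
        Real.rpow_add hp0, Real.rpow_one, ← Real.sqrt_eq_rpow, one_div]
    rw [he, hT]
    dsimp only
    rw [div_eq_mul_one_div]
  calc |(∑' j, F j) - ∑' j, G j|
      = |∑' j, (F j - G j)| := by rw [Summable.tsum_sub hFs hGs]
    _ ≤ ∑' j, |F j - G j| := by
        simpa [Real.norm_eq_abs] using
          norm_tsum_le_tsum_norm (f := fun j => F j - G j) (by simpa [Real.norm_eq_abs] using habs)
    _ ≤ ∑' j, B j := Summable.tsum_le_tsum hkey habs hBs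
    _ ≤ T p := tsum_le_of_sum_range_le hBnonneg hBpartial
    _ ≤ 2 * (p:ℝ) ^ (-(3:ℝ)/2) := hTp
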